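/- arXiv:2408.01158 — 3 statements merged into one kernel-verified Lean document; each statement's English description precedes it below -/
import Mathlib

section
/- For the complex number s = σ + iω with σ > 0 and a constant ħ > 0, the real part of b·s|s|²/(ħs² + 1) equals b·σ·(σ² + ω²)·(ħ(σ² + ω²) + 1) / ((ħ(σ² − ω²) + 1)² + 4σ²ω²ħ²), and in particular it is nonnegative for every b ≥ 0. -/
-- STATEMENT 0: For s = sigma + i*omega with sigma > 0, hbar > 0 and b >= 0, the real part of
-- b*s*|s|^2/(hbar*s^2+1) has the stated explicit form and is nonnegative.
theorem stmt0 (σ ω hbar b : ℝ) (hσ : 0 < σ) (hhbar : 0 < hbar) (hb : 0 ≤ b)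
    (s : ℂ) (hs : s = Complex.mk σ ω) :
    ((b : ℂ) * s * ((‖s‖ : ℝ) : ℂ) ^ 2 / ((hbar : ℂ) * s ^ 2 + 1)).re =
      b * σ * (σ ^ 2 + ω ^ 2) * (hbar * (σ ^ 2 + ω ^ 2) + 1) /
        ((hbar * (σ ^ 2 - ω ^ 2) + 1) ^ 2 + 4 * σ ^ 2 * ω ^ 2 * hbar ^ 2) ∧
    0 ≤ ((b : ℂ) * s * ((‖s‖ : ℝ) : ℂ) ^ 2 / ((hbar : ℂ) * s ^ 2 + 1)).re := by
  have hden : 0 < (hbar * (σ ^ 2 - ω ^ 2) + 1) ^ 2 + 4 * σ ^ 2 * ω ^ 2 * hbar ^ 2 := by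
    rcases eq_or_ne ω 0 with hω | hω
    · subst hω
      have he : σ ^ 2 - 0 ^ 2 = σ ^ 2 := by ring
      rw [he]
      positivity
    · have h2 : 0 < 4 * σ ^ 2 * ω ^ 2 * hbar ^ 2 := by positivity
      nlinarith [sq_nonneg (hbar * (σ ^ 2 - ω ^ 2) + 1)]
  have key : ((b : ℂ) * s * ((‖s‖ : ℝ) : ℂ) ^ 2 / ((hbar : ℂ) * s ^ 2 + 1)).re =
      b * σ * (σ ^ 2 + ω ^ 2) * (hbar * (σ ^ 2 + ω ^ 2) + 1) /
        ((hbar * (σ ^ 2 - ω ^ 2) + 1) ^ 2 + 4 * σ ^ 2 * ω ^ 2 * hbar ^ 2) := by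
    subst hs
    have habs : ((‖Complex.mk σ ω‖ : ℝ) : ℂ) ^ 2 = ((σ ^ 2 + ω ^ 2 : ℝ) : ℂ) := by
      rw [← Complex.ofReal_pow, Complex.sq_norm, Complex.normSq_mk]
      ring_nf
    rw [habs]
    simp only [pow_two, Complex.div_re, Complex.normSq_apply, Complex.mul_re, Complex.mul_im,
      Complex.add_re, Complex.add_im, Complex.ofReal_re, Complex.ofReal_im,
      Complex.one_re, Complex.one_im]
    rw [← add_div, div_eq_div_iff (ne_of_gt ?_) (ne_of_gt ?_)]
    · ring
    · nlinarith [hden]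
    · nlinarith [hden]
  refine ⟨key, ?_⟩
  rw [key]
  have hnum : 0 ≤ b * σ * (σ ^ 2 + ω ^ 2) * (hbar * (σ ^ 2 + ω ^ 2) + 1) := by positivity
  exact div_nonneg hnum hden.le
end

section
/- For s = σ + iω with σ > 0, the sesquilinear form a(u, s·u) := c₀^{−1} s̄ |s|² ‖u‖²_{L²} + s̄ ‖∇u‖²_{L²} + (b/ħ) s̄ ‖χ_Ω u‖²_{L²} − (b/ħ) s̄ (ħs² + 1)^{−1} ‖χ_Ω u‖²_{L²} satisfies |a(u, s·u)| ≥ Re(a(u, s·u)) ≥ min{σ, σ³} ‖u‖²_{H¹(ℝ³)} (up to the constant min{c₀^{−1},1}) for all u ∈ H¹(ℝ³). -/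
open MeasureTheory

theorem stmt9 (c₀ b hbar σ ω : ℝ) (hc₀ : 0 < c₀) (hb : 0 < b) (hhbar : 0 < hbar)
    (hσ : 0 < σ) (s : ℂ) (hs : s = Complex.mk σ ω)
    (Ω : Set (EuclideanSpace ℝ (Fin 3))) (hΩ : MeasurableSet Ω)
    (u : EuclideanSpace ℝ (Fin 3) → ℂ)
    (hu : MemLp u 2 volume) (hu' : Differentiable ℝ u)
    (hgrad : Integrable (fun x => ‖fderiv ℝ u x‖ ^ 2))
    (A G Xq : ℝ)
    (hA : A = ∫ x, ‖u x‖ ^ 2) (hG : G = ∫ x, ‖fderiv ℝ u x‖ ^ 2)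
    (hXq : Xq = ∫ x in Ω, ‖u x‖ ^ 2)
    (a : ℂ)
    (ha : a = (c₀⁻¹ : ℂ) * (starRingEnd ℂ) s * ((‖s‖ : ℝ) : ℂ) ^ 2 * (A : ℂ) +
      (starRingEnd ℂ) s * (G : ℂ) + ((b / hbar : ℝ) : ℂ) * (starRingEnd ℂ) s * (Xq : ℂ) -
      ((b / hbar : ℝ) : ℂ) * (starRingEnd ℂ) s / ((hbar : ℂ) * s ^ 2 + 1) * (Xq : ℂ)) :
    min c₀⁻¹ 1 * min σ (σ ^ 3) * (A + G) ≤ a.re ∧ a.re ≤ ‖a‖ := by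
  have hre : s.re = σ := by rw [hs]
  have him : s.im = ω := by rw [hs]
  have hA0 : 0 ≤ A := by rw [hA]; exact integral_nonneg fun x => by positivity
  have hG0 : 0 ≤ G := by rw [hG]; exact integral_nonneg fun x => by positivity
  have hX0 : 0 ≤ Xq := by rw [hXq]; exact integral_nonneg fun x => by positivity
  set D : ℂ := (hbar : ℂ) * s ^ 2 + 1 with hD
  set T : ℂ := (starRingEnd ℂ) s - (starRingEnd ℂ) s / D with hT
  have habs : ((‖s‖ : ℝ) : ℂ) ^ 2 = ((σ^2 + ω^2 : ℝ) : ℂ) := by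
    rw [← Complex.ofReal_pow, Complex.sq_norm, Complex.normSq_apply, hre, him]
    push_cast; ring
  have ha' : a = ((c₀⁻¹ * (σ^2 + ω^2) * A : ℝ) : ℂ) * (starRingEnd ℂ) s
      + ((G : ℝ) : ℂ) * (starRingEnd ℂ) s + ((b / hbar * Xq : ℝ) : ℂ) * T := by
    rw [ha, habs, hT]; push_cast; ring
  have hconjre : ((starRingEnd ℂ) s).re = σ := by
    rw [Complex.conj_re, hre]
  have hTre : 0 ≤ T.re := by
    by_cases hD0 : D = 0
    · rw [hT, hD0, div_zero, sub_zero, hconjre]; exact hσ.le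
    · have hTeq : T = ((hbar * Complex.normSq s : ℝ) : ℂ) * (s / D) := by
        rw [hT, sub_div' hD0, mul_div_assoc', div_eq_div_iff hD0 hD0]
        push_cast
        rw [Complex.normSq_eq_conj_mul_self, hD]
        ring
      rw [hTeq, Complex.re_ofReal_mul]
      apply mul_nonneg (mul_nonneg hhbar.le (Complex.normSq_nonneg s))
      rw [Complex.div_re]
      have hDre : D.re = hbar * (σ^2 - ω^2) + 1 := by
        rw [hD, pow_two]
        simp only [Complex.add_re, Complex.mul_re, Complex.mul_im, Complex.ofReal_re, Complex.ofReal_im, Complex.one_re, hre, him]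
        ring
      have hDim : D.im = 2 * hbar * σ * ω := by
        rw [hD, pow_two]
        simp only [Complex.add_im, Complex.mul_im, Complex.mul_re, Complex.ofReal_re, Complex.ofReal_im, Complex.one_im, hre, him]
        ring
      have key : s.re * D.re / Complex.normSq D + s.im * D.im / Complex.normSq D
          = σ * (hbar * (σ^2 + ω^2) + 1) / Complex.normSq D := by
        rw [hre, him, hDre, hDim]; ring
      rw [key]
      have : 0 ≤ Complex.normSq D := Complex.normSq_nonneg D
      positivity
  have hare : a.re = c₀⁻¹ * (σ^2 + ω^2) * A * σ + G * σ + (b / hbar * Xq) * T.re := by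
    rw [ha']
    simp only [Complex.add_re, Complex.re_ofReal_mul, hconjre]
  constructor
  · rw [hare]
    have hm1 : min c₀⁻¹ 1 ≤ c₀⁻¹ := min_le_left _ _
    have hm1' : min c₀⁻¹ 1 ≤ 1 := min_le_right _ _
    have hm2 : min σ (σ^3) ≤ σ := min_le_left _ _
    have hm2' : min σ (σ^3) ≤ σ^3 := min_le_right _ _
    have hm10 : 0 ≤ min c₀⁻¹ 1 := le_min (by positivity) zero_le_one
    have hm20 : 0 ≤ min σ (σ^3) := le_min hσ.le (by positivity)
    have h1 : min c₀⁻¹ 1 * min σ (σ^3) ≤ c₀⁻¹ * σ^3 :=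
      mul_le_mul hm1 hm2' hm20 (by positivity)
    have h2 : min c₀⁻¹ 1 * min σ (σ^3) ≤ σ := by
      calc min c₀⁻¹ 1 * min σ (σ^3) ≤ 1 * σ := mul_le_mul hm1' hm2 hm20 zero_le_one
        _ = σ := one_mul σ
    have hlast : 0 ≤ (b / hbar * Xq) * T.re := by positivity
    nlinarith [mul_le_mul_of_nonneg_right h1 hA0, mul_le_mul_of_nonneg_right h2 hG0,
      mul_nonneg (mul_nonneg (mul_nonneg (by positivity : (0:ℝ) ≤ c₀⁻¹) hσ.le) (sq_nonneg ω)) hA0]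
  · exact Complex.re_le_norm a
end

section
/- Let f : Ω × [0,T] → ℝ with f(·, t) Lipschitz in x uniformly in t (constant L₁) and f(y, ·) Lipschitz in t uniformly in y (constant L₂), and let Ω_j ⊂ Ω have volume ε with center z_j and diameter ≤ C ε^{1/3}. Then for any x with dist(x, Ω_j) ≥ d > 0, | ∫_{Ω_j} f(y, t − c₀^{−1}|x − y|)/(4π|x − y|) dy − ε f(z_j, t − c₀^{−1}|x − z_j|)/(4π|x − z_j|) | ≤ C' (L₁ + L₂ + ‖f‖_∞) ε^{4/3} / d². -/
open MeasureTheory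

-- STATEMENT 15: one-point quadrature estimate for the retarded potential over a cell Ω_j of
-- volume ε, center z_j and diameter ≤ Cd·ε^{1/3}, at an observation point x at distance ≥ d
-- from (the convex hull of) Ω_j:
-- |∫_{Ω_j} f(y, t − c₀⁻¹|x−y|)/(4π|x−y|) dy − ε f(z_j, t − c₀⁻¹|x−z_j|)/(4π|x−z_j|)|
--   ≤ C'(L₁ + L₂ + ‖f‖_∞) ε^{4/3}/d².
set_option maxHeartbeats 1000000 in
theorem stmt15 (c₀ Cd : ℝ) (hc₀ : 0 < c₀) (hCd : 0 < Cd) :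
    ∃ C' > 0, ∀ (Ωj : Set (EuclideanSpace ℝ (Fin 3)))
      (zj x : EuclideanSpace ℝ (Fin 3)) (f : EuclideanSpace ℝ (Fin 3) → ℝ → ℝ)
      (L₁ L₂ M ε d t : ℝ),
      MeasurableSet Ωj → volume Ωj = ENNReal.ofReal ε → 0 < ε → zj ∈ Ωj →
      EMetric.diam Ωj ≤ ENNReal.ofReal (Cd * ε ^ ((1 : ℝ) / 3)) →
      0 ≤ L₁ → 0 ≤ L₂ → 0 ≤ M →
      (∀ y t', |f y t'| ≤ M) →
      (∀ t', LipschitzWith (Real.toNNReal L₁) (fun y => f y t')) →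
      (∀ y, LipschitzWith (Real.toNNReal L₂) (f y)) →
      0 < d → d ≤ 1 →
      (∀ y ∈ convexHull ℝ Ωj, d ≤ dist x y) →
      |(∫ y in Ωj, f y (t - c₀⁻¹ * dist x y) / (4 * Real.pi * dist x y)) -
          ε * f zj (t - c₀⁻¹ * dist x zj) / (4 * Real.pi * dist x zj)| ≤
        C' * (L₁ + L₂ + M) * ε ^ ((4 : ℝ) / 3) / d ^ 2 := by
  refine ⟨(1 + c₀⁻¹) * Cd, by positivity, ?_⟩
  intro Ωj zj x f L₁ L₂ M ε d t hmeas hvol hε hzj hdiam hL₁ hL₂ hM hfbd hlip₁ hlip₂ hd hd1 hdist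
  have hπ : (0 : ℝ) < Real.pi := Real.pi_pos
  set D : ℝ := Cd * ε ^ ((1 : ℝ) / 3) with hD
  have hD0 : 0 < D := by positivity
  -- distances from x to points of Ωj
  have hdΩ : ∀ y ∈ Ωj, d ≤ dist x y := fun y hy => hdist y (subset_convexHull ℝ Ωj hy)
  have hrz : d ≤ dist x zj := hdΩ zj hzj
  have hrz0 : 0 < dist x zj := lt_of_lt_of_le hd hrz
  -- diameter bound in real distance
  have hdiam' : ∀ y ∈ Ωj, dist y zj ≤ D := by
    intro y hy
    have h1 : edist y zj ≤ ENNReal.ofReal D :=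
      le_trans (EMetric.edist_le_diam_of_mem hy hzj) hdiam
    rw [edist_dist] at h1
    exact (ENNReal.ofReal_le_ofReal_iff hD0.le).mp h1
  set g : EuclideanSpace ℝ (Fin 3) → ℝ :=
    fun y => f y (t - c₀⁻¹ * dist x y) / (4 * Real.pi * dist x y) with hg
  set K : ℝ := (L₁ + c₀⁻¹ * L₂ + M) * D / d ^ 2 with hK
  -- pointwise estimate
  have key : ∀ y ∈ Ωj, |g y - g zj| ≤ K := by
    intro y hy
    have hry : d ≤ dist x y := hdΩ y hy
    have hry0 : 0 < dist x y := lt_of_lt_of_le hd hry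
    set ry := dist x y
    set rz := dist x zj
    set Fy := f y (t - c₀⁻¹ * ry)
    set Fz := f zj (t - c₀⁻¹ * rz)
    have hyz : dist y zj ≤ D := hdiam' y hy
    have hrr : |ry - rz| ≤ D := by
      have h1 : |dist y x - dist zj x| ≤ dist y zj := abs_dist_sub_le y zj x
      rw [dist_comm y x, dist_comm zj x] at h1
      exact le_trans h1 hyz
    have hFdiff : |Fy - Fz| ≤ (L₁ + c₀⁻¹ * L₂) * D := by
      have h1 : |Fy - f zj (t - c₀⁻¹ * ry)| ≤ L₁ * D := by
        have := (hlip₁ (t - c₀⁻¹ * ry)).dist_le_mul y zj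
        rw [Real.coe_toNNReal L₁ hL₁, Real.dist_eq] at this
        exact le_trans this (by nlinarith [dist_nonneg (x := y) (y := zj)])
      have h2 : |f zj (t - c₀⁻¹ * ry) - Fz| ≤ c₀⁻¹ * L₂ * D := by
        have := (hlip₂ zj).dist_le_mul (t - c₀⁻¹ * ry) (t - c₀⁻¹ * rz)
        rw [Real.coe_toNNReal L₂ hL₂] at this
        simp only [Real.dist_eq] at this
        have heq : (t - c₀⁻¹ * ry) - (t - c₀⁻¹ * rz) = -(c₀⁻¹ * (ry - rz)) := by ring
        rw [heq, abs_neg, abs_mul, abs_of_nonneg (by positivity : (0:ℝ) ≤ c₀⁻¹)] at this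
        calc |f zj (t - c₀⁻¹ * ry) - Fz| ≤ L₂ * (c₀⁻¹ * |ry - rz|) := this
          _ ≤ c₀⁻¹ * L₂ * D := by
            have h := mul_le_mul_of_nonneg_left hrr
              (by positivity : (0:ℝ) ≤ c₀⁻¹ * L₂)
            nlinarith [h]
      calc |Fy - Fz| = |(Fy - f zj (t - c₀⁻¹ * ry)) + (f zj (t - c₀⁻¹ * ry) - Fz)| := by
            ring_nf
        _ ≤ |Fy - f zj (t - c₀⁻¹ * ry)| + |f zj (t - c₀⁻¹ * ry) - Fz| := abs_add_le _ _
        _ ≤ (L₁ + c₀⁻¹ * L₂) * D := by linarith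
    have hFz : |Fz| ≤ M := hfbd zj _
    have hid : Fy / (4 * Real.pi * ry) - Fz / (4 * Real.pi * rz)
        = ((Fy - Fz) * rz + Fz * (rz - ry)) / (4 * Real.pi * ry * rz) := by
      field_simp
      ring
    have hnum : |(Fy - Fz) * rz + Fz * (rz - ry)| ≤ (L₁ + c₀⁻¹ * L₂) * D * rz + M * D := by
      calc |(Fy - Fz) * rz + Fz * (rz - ry)|
          ≤ |Fy - Fz| * |rz| + |Fz| * |rz - ry| := by
            refine le_trans (abs_add_le _ _) ?_
            rw [abs_mul, abs_mul]
        _ ≤ (L₁ + c₀⁻¹ * L₂) * D * rz + M * D := by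
            rw [abs_of_pos hrz0]
            have h3 : |rz - ry| ≤ D := by rw [abs_sub_comm]; exact hrr
            have := abs_nonneg (Fy - Fz)
            have := abs_nonneg (rz - ry)
            nlinarith
    have hden : (0:ℝ) < 4 * Real.pi * ry * rz := by positivity
    rw [hg]
    simp only []
    rw [hid, abs_div, abs_of_pos hden, hK, div_le_div_iff₀ hden (by positivity)]
    have hC₁ : 0 ≤ L₁ + c₀⁻¹ * L₂ := by positivity
    have hd2ry : d ^ 2 ≤ ry := by nlinarith
    have hd2 : d ^ 2 ≤ ry * rz := by nlinarith
    calc |(Fy - Fz) * rz + Fz * (rz - ry)| * d ^ 2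
        ≤ ((L₁ + c₀⁻¹ * L₂) * D * rz + M * D) * d ^ 2 :=
          mul_le_mul_of_nonneg_right hnum (sq_nonneg d)
      _ = (L₁ + c₀⁻¹ * L₂) * D * rz * d ^ 2 + M * D * d ^ 2 := by ring
      _ ≤ (L₁ + c₀⁻¹ * L₂) * D * rz * ry + M * D * (ry * rz) :=
          add_le_add
            (mul_le_mul_of_nonneg_left hd2ry (by positivity))
            (mul_le_mul_of_nonneg_left hd2 (by positivity))
      _ ≤ (L₁ + c₀⁻¹ * L₂ + M) * D * (4 * Real.pi * ry * rz) := by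
          nlinarith [Real.pi_gt_three,
            mul_nonneg (mul_nonneg (mul_nonneg hD0.le hry0.le) hrz0.le)
              (by positivity : (0:ℝ) ≤ L₁ + c₀⁻¹ * L₂ + M)]
  -- measurability / integrability
  have hcontf : Continuous fun p : (EuclideanSpace ℝ (Fin 3)) × ℝ => f p.1 p.2 := by
    have := LipschitzWith.uncurry (f := f) (Kα := Real.toNNReal L₁) (Kβ := Real.toNNReal L₂)
      (fun b => hlip₁ b) (fun a => hlip₂ a)
    exact this.continuous
  have hcontF : Continuous fun y : EuclideanSpace ℝ (Fin 3) => f y (t - c₀⁻¹ * dist x y) := by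
    exact hcontf.comp (continuous_id.prodMk
      (continuous_const.sub (continuous_const.mul (continuous_const.dist continuous_id))))
  have hgmeas : Measurable g :=
    hcontF.measurable.div (continuous_const.mul (continuous_const.dist continuous_id)).measurable
  have hvol' : volume Ωj < ⊤ := by rw [hvol]; exact ENNReal.ofReal_lt_top
  have hgbd : ∀ y ∈ Ωj, ‖g y‖ ≤ M / (4 * Real.pi * d) := by
    intro y hy
    have hry : d ≤ dist x y := hdΩ y hy
    have hry0 : 0 < dist x y := lt_of_lt_of_le hd hry
    rw [Real.norm_eq_abs, hg]
    simp only []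
    rw [abs_div, abs_of_pos (by positivity : (0:ℝ) < 4 * Real.pi * dist x y)]
    apply div_le_div₀ hM (hfbd y _) (by positivity)
    nlinarith
  have hInt : IntegrableOn g Ωj := by
    apply Measure.integrableOn_of_bounded hvol'.ne hgmeas.aestronglyMeasurable
      (M := M / (4 * Real.pi * d))
    rw [ae_restrict_iff' hmeas]
    exact Filter.Eventually.of_forall hgbd
  have htoReal : (volume Ωj).toReal = ε := by rw [hvol, ENNReal.toReal_ofReal hε.le]
  have hconst : (∫ _ in Ωj, g zj) = ε * g zj := by
    rw [setIntegral_const, measureReal_def, htoReal, smul_eq_mul]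
  have hsplit : (∫ y in Ωj, g y) - ε * g zj = ∫ y in Ωj, (g y - g zj) := by
    rw [integral_sub hInt ((integrableOn_const_iff).mpr (Or.inr hvol')), hconst]
  have hbound : |∫ y in Ωj, (g y - g zj)| ≤ K * ε := by
    have := norm_setIntegral_le_of_norm_le_const (μ := volume) (s := Ωj)
      (f := fun y => g y - g zj) hvol'
      (fun y hy => by rw [Real.norm_eq_abs]; exact key y hy)
    rw [Real.norm_eq_abs, measureReal_def, htoReal] at this
    exact this
  have hLHS : (∫ y in Ωj, f y (t - c₀⁻¹ * dist x y) / (4 * Real.pi * dist x y)) -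
      ε * f zj (t - c₀⁻¹ * dist x zj) / (4 * Real.pi * dist x zj)
      = (∫ y in Ωj, g y) - ε * g zj := by
    rw [hg]
    simp only [mul_div_assoc]
  rw [hLHS, hsplit]
  refine le_trans hbound ?_
  -- final arithmetic
  have hrpow : ε ^ ((4 : ℝ) / 3) = ε ^ ((1 : ℝ) / 3) * ε := by
    rw [show (4 : ℝ) / 3 = 1 / 3 + 1 by norm_num, Real.rpow_add hε, Real.rpow_one]
  rw [hK, hrpow]
  rw [div_mul_eq_mul_div]
  have h1 : L₁ + c₀⁻¹ * L₂ + M ≤ (1 + c₀⁻¹) * (L₁ + L₂ + M) := by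
    have hc : 0 ≤ c₀⁻¹ := by positivity
    nlinarith
  have h2 : (L₁ + c₀⁻¹ * L₂ + M) * D * ε ≤ (1 + c₀⁻¹) * Cd * (L₁ + L₂ + M) * (ε ^ ((1:ℝ)/3) * ε) := by
    rw [hD]
    calc (L₁ + c₀⁻¹ * L₂ + M) * (Cd * ε ^ ((1:ℝ)/3)) * ε
        ≤ ((1 + c₀⁻¹) * (L₁ + L₂ + M)) * (Cd * ε ^ ((1:ℝ)/3)) * ε :=
          mul_le_mul_of_nonneg_right
            (mul_le_mul_of_nonneg_right h1 (by positivity)) hε.le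
      _ = (1 + c₀⁻¹) * Cd * (L₁ + L₂ + M) * (ε ^ ((1:ℝ)/3) * ε) := by ring
  gcongr
end
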